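/- Fix k ≥ 2, r ≥ 1, p_i ≥ r for each i ∈ [k], p = Σ_{i=1}^k p_i, and λ ∈ (0,1). Let U_{(i)} ∈ R^{p_i×r} have orthonormal columns, and let Σ ∈ R^{p×p} be the block matrix whose i-th diagonal block is I_{p_i} and whose (i,j)-th block (i ≠ j) is λ U_{(i)} U_{(j)}^T. Let U = [U_{(1)}^T, ..., U_{(k)}^T]^T ∈ R^{p×r}. Then Σ U = (1 + (k−1)λ) U, and the eigenvalues of Σ are: 1 + (k−1)λ with multiplicity r (with eigenspace equal to the column span of U), 1 − λ with multiplicity (k−1)r, and 1 with multiplicity p − kr. -/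

import Mathlib

open MeasureTheory ProbabilityTheory Matrix Real
open scoped Classical

noncomputable section

/-- Frobenius norm of a real matrix. -/
def frob {m n : ℕ} (M : Matrix (Fin m) (Fin n) ℝ) : ℝ :=
  Real.sqrt (∑ i, ∑ j, (M i j) ^ 2)

/-- Distance between `p × r` matrices modulo right multiplication by an orthogonal matrix:
`dist(U,V) = min_{P ∈ O(r)} ‖U P - V‖_F`. -/
def gdist {p r : ℕ} (U V : Matrix (Fin p) (Fin r) ℝ) : ℝ :=
  sInf {x : ℝ | ∃ P : Matrix (Fin r) (Fin r) ℝ, Pᵀ * P = 1 ∧ x = frob (U * P - V)}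

/-- The positive semidefinite square root, as `Matrix.PosSemidef.sqrt` was defined in the older
Mathlib (removed since). -/
def Matrix.PosSemidef.sqrt {n : Type*} [Fintype n] [DecidableEq n]
    {A : Matrix n n ℝ} (hA : A.PosSemidef) : Matrix n n ℝ :=
  hA.1.eigenvectorUnitary.1 * diagonal ((↑) ∘ Real.sqrt ∘ hA.1.eigenvalues) *
  (star hA.1.eigenvectorUnitary : Matrix n n ℝ)

/-- Centered multivariate Gaussian with covariance `S`, as the law of `S^{1/2} z` for a
standard Gaussian vector `z`. -/
def mvGaussian {m : ℕ} (S : Matrix (Fin m) (Fin m) ℝ) : Measure (Fin m → ℝ) :=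
  if h : S.PosSemidef then
    (Measure.pi fun _ : Fin m => gaussianReal 0 1).map fun z => h.sqrt.mulVec z
  else 0

/-- Law of `n` i.i.d. samples from `N_m(0, S)`. -/
def iidLaw (n : ℕ) {m : ℕ} (S : Matrix (Fin m) (Fin m) ℝ) : Measure (Fin n → Fin m → ℝ) :=
  Measure.pi fun _ : Fin n => mvGaussian S

def sampleMean {n m : ℕ} (X : Fin n → Fin m → ℝ) (i : Fin m) : ℝ := (∑ t, X t i) / n

/-- Sample covariance matrix. -/
def sampleCov {n m : ℕ} (X : Fin n → Fin m → ℝ) : Matrix (Fin m) (Fin m) ℝ :=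
  Matrix.of fun i j => (∑ t, (X t i - sampleMean X i) * (X t j - sampleMean X j)) / n

/-- Block-diagonal part of a matrix with respect to block labels `β`. -/
def blockPart {m k : ℕ} (β : Fin m → Fin k) (M : Matrix (Fin m) (Fin m) ℝ) :
    Matrix (Fin m) (Fin m) ℝ :=
  Matrix.of fun i j => if β i = β j then M i j else 0

/-- Rows of `M` belonging to block `i`, all other rows zeroed out. -/
def restrictRows {m k c : ℕ} (β : Fin m → Fin k) (i : Fin k) (M : Matrix (Fin m) (Fin c) ℝ) :
    Matrix (Fin m) (Fin c) ℝ :=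
  Matrix.of fun a b => if β a = i then M a b else 0

/-- ℓ₂ norm of row `i` of `M`. -/
def rowNorm {m r : ℕ} (M : Matrix (Fin m) (Fin r) ℝ) (i : Fin m) : ℝ :=
  Real.sqrt (∑ j, (M i j) ^ 2)

/-- Set of indices of nonzero rows. -/
def rowSupport {m r : ℕ} (M : Matrix (Fin m) (Fin r) ℝ) : Set (Fin m) := {i | M i ≠ 0}

/-- `W'` is the hard thresholding of `W` keeping the `k` rows of largest ℓ₂ norm
(ties broken toward smaller indices). -/
def IsHT {m r : ℕ} (W : Matrix (Fin m) (Fin r) ℝ) (k : ℕ) (W' : Matrix (Fin m) (Fin r) ℝ) : Prop :=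
  ∃ C : Finset (Fin m), C.card = min k m ∧ (∀ i ∈ C, W' i = W i) ∧ (∀ i ∉ C, W' i = 0) ∧
    ∀ i ∈ C, ∀ j ∉ C, rowNorm W j < rowNorm W i ∨ (rowNorm W j = rowNorm W i ∧ i < j)

/-- Positive semidefinite square root (junk value `0` if not psd). -/
def psqrt {r : ℕ} (M : Matrix (Fin r) (Fin r) ℝ) : Matrix (Fin r) (Fin r) ℝ :=
  if h : M.PosSemidef then h.sqrt else 0

/-- Inverse square root. -/
def invSqrt {r : ℕ} (M : Matrix (Fin r) (Fin r) ℝ) : Matrix (Fin r) (Fin r) ℝ := (psqrt M)⁻¹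

/-- Nuclear norm `Tr √(Mᵀ M)`. -/
def nucNorm {a b : ℕ} (M : Matrix (Fin a) (Fin b) ℝ) : ℝ := (psqrt (Mᵀ * M)).trace

/-- Entrywise ℓ₁ norm. -/
def l1Norm {a b : ℕ} (M : Matrix (Fin a) (Fin b) ℝ) : ℝ := ∑ i, ∑ j, |M i j|

/-- Entrywise sup norm. -/
def maxAbs {a b : ℕ} (M : Matrix (Fin a) (Fin b) ℝ) : ℝ := sSup {x : ℝ | ∃ i j, x = |M i j|}

/-- Membership in the Fantope `{X : 0 ⪯ X ⪯ I, Tr X = r}`. -/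
def InFantope {p : ℕ} (r : ℕ) (X : Matrix (Fin p) (Fin p) ℝ) : Prop :=
  X.PosSemidef ∧ (1 - X).PosSemidef ∧ X.trace = (r : ℝ)

/-- `F` minimizes `-⟨Sh, ·⟩ + ρ ‖·‖_1` over symmetric matrices whose conjugation by
`S0h^{1/2}` lies in the Fantope. -/
def IsFantopeMin {p : ℕ} (r : ℕ) (Sh S0h : Matrix (Fin p) (Fin p) ℝ) (ρ : ℝ)
    (F : Matrix (Fin p) (Fin p) ℝ) : Prop :=
  F.IsSymm ∧ InFantope r (psqrt S0h * F * psqrt S0h) ∧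
    ∀ G : Matrix (Fin p) (Fin p) ℝ, G.IsSymm → InFantope r (psqrt S0h * G * psqrt S0h) →
      -(Shᵀ * F).trace + ρ * l1Norm F ≤ -(Shᵀ * G).trace + ρ * l1Norm G

/-- `L` maximizes `⟨Sh, L Lᵀ⟩` subject to `Lᵀ S0h L = I_r` and row support inside `I`. -/
def IsRestrictedMax {p r : ℕ} (Sh S0h : Matrix (Fin p) (Fin p) ℝ) (I : Finset (Fin p))
    (L : Matrix (Fin p) (Fin r) ℝ) : Prop :=
  Lᵀ * S0h * L = 1 ∧ (∀ i ∉ I, L i = 0) ∧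
    ∀ L' : Matrix (Fin p) (Fin r) ℝ, L'ᵀ * S0h * L' = 1 → (∀ i ∉ I, L' i = 0) →
      (Shᵀ * (L' * L'ᵀ)).trace ≤ (Shᵀ * (L * Lᵀ)).trace

/-- Kullback–Leibler divergence `∫ log (dP/dQ) dP`. -/
def klDivR {α : Type*} [MeasurableSpace α] (P Q : Measure α) : ℝ :=
  ∫ x, Real.log (P.rnDeriv Q x).toReal ∂P


lemma auxSumMulVec {m n k : ℕ} (M : Fin k → Matrix (Fin m) (Fin n) ℝ) (x : Fin n → ℝ) :
    (∑ i, M i) *ᵥ x = ∑ i, (M i) *ᵥ x := by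
  funext j
  simp only [Matrix.mulVec, dotProduct, Matrix.sum_apply, Finset.sum_apply, Finset.sum_mul]
  rw [Finset.sum_comm]

lemma auxMulVecSum {m n k : ℕ} (A : Matrix (Fin m) (Fin n) ℝ) (v : Fin k → Fin n → ℝ) :
    A *ᵥ (∑ i, v i) = ∑ i, A *ᵥ (v i) :=
  map_sum (Matrix.mulVecLin A) v Finset.univ

/-- the map `c ↦ ∑ᵢ Vᵢ (c i) - k⁻¹ U (∑ᵢ c i)`. -/
def psiMap {p r k : ℕ} (U : Matrix (Fin p) (Fin r) ℝ)
    (V : Fin k → Matrix (Fin p) (Fin r) ℝ) : (Fin k → Fin r → ℝ) →ₗ[ℝ] (Fin p → ℝ) where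
  toFun c := (∑ i, (V i) *ᵥ (c i)) - ((k:ℝ))⁻¹ • (U *ᵥ (∑ i, c i))
  map_add' c d := by
    simp only [Pi.add_apply, Matrix.mulVec_add, Finset.sum_add_distrib, smul_add]
    abel
  map_smul' a c := by
    simp only [Pi.smul_apply, RingHom.id_apply, ← Finset.smul_sum, Matrix.mulVec_smul,
      smul_sub, smul_comm a ((k:ℝ))⁻¹]

/-- eigenstructure of the lower-bound covariance construction. -/
theorem statement19
    (k r p : ℕ) (hk : 2 ≤ k) (hr : 1 ≤ r)
    (p_ : Fin k → ℕ) (hpr : ∀ i, r ≤ p_ i) (hp : p = ∑ i, p_ i)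
    (lam : ℝ) (hlam0 : 0 < lam) (hlam1 : lam < 1)
    (β : Fin p → Fin k) (hβ : ∀ i : Fin k, ({a : Fin p | β a = i}).ncard = p_ i)
    (U : Matrix (Fin p) (Fin r) ℝ)
    -- each block `U_{(i)}` has orthonormal columns
    (hUorth : ∀ i : Fin k, (restrictRows β i U)ᵀ * restrictRows β i U = 1)
    (S : Matrix (Fin p) (Fin p) ℝ)
    (hSdef : ∀ a b : Fin p,
      S a b = if β a = β b then (if a = b then 1 else 0) else lam * (U * Uᵀ) a b) :
    S * U = (1 + ((k : ℝ) - 1) * lam) • U ∧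
    Module.End.eigenspace (Matrix.toLin' S) (1 + ((k : ℝ) - 1) * lam) =
      Submodule.span ℝ (Set.range fun j : Fin r => Uᵀ j) ∧
    Module.finrank ℝ (Module.End.eigenspace (Matrix.toLin' S) (1 + ((k : ℝ) - 1) * lam)) = r ∧
    Module.finrank ℝ (Module.End.eigenspace (Matrix.toLin' S) (1 - lam)) = (k - 1) * r ∧
    Module.finrank ℝ (Module.End.eigenspace (Matrix.toLin' S) 1) = p - k * r := by
  classical
  have hkR : (2:ℝ) ≤ (k:ℝ) := by exact_mod_cast hk
  have hk0 : (k:ℝ) ≠ 0 := by linarith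
  have hk1 : (k:ℝ) - 1 ≠ 0 := by linarith
  have hlam : lam ≠ 0 := ne_of_gt hlam0
  set Ui : Fin k → Matrix (Fin p) (Fin r) ℝ := fun i => restrictRows β i U with hUidef
  -- (a) block-orthogonality
  have horth : ∀ i j, (Ui i)ᵀ * Ui j = if i = j then (1 : Matrix (Fin r) (Fin r) ℝ) else 0 := by
    intro i j
    by_cases h : i = j
    · subst h; simpa using hUorth i
    · simp only [h, if_false]
      ext c d
      simp only [Matrix.mul_apply, Matrix.transpose_apply, Matrix.zero_apply, hUidef,
        restrictRows, Matrix.of_apply]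
      refine Finset.sum_eq_zero fun a _ => ?_
      by_cases h1 : β a = i
      · by_cases h2 : β a = j
        · exact absurd (h1 ▸ h2) h
        · simp [h2]
      · simp [h1]
  -- (b) the blocks sum to U
  have hsum : ∑ i, Ui i = U := by
    ext a c
    simp only [Matrix.sum_apply, hUidef, restrictRows, Matrix.of_apply]
    rw [Finset.sum_ite_eq Finset.univ (β a) (fun _ => U a c)]
    simp
  -- entries of the block-diagonal projector sum
  have hB : ∀ a b, (∑ i, Ui i * (Ui i)ᵀ) a b = if β a = β b then (U * Uᵀ) a b else 0 := by
    intro a b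
    simp only [Matrix.sum_apply, Matrix.mul_apply, Matrix.transpose_apply, hUidef,
      restrictRows, Matrix.of_apply, ite_mul, mul_ite, zero_mul, mul_zero]
    rw [Finset.sum_comm]
    by_cases h : β a = β b
    · rw [if_pos h]
      refine Finset.sum_congr rfl fun c _ => ?_
      rw [Finset.sum_ite_eq Finset.univ (β b) (fun i => if β a = i then U a c * U b c else 0)]
      simp [h]
    · rw [if_neg h]
      refine Finset.sum_eq_zero fun c _ => ?_
      refine Finset.sum_eq_zero fun i _ => ?_
      by_cases h1 : β a = i
      · by_cases h2 : β b = i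
        · exact absurd (h1.trans h2.symm) h
        · simp [h1, h2]
      · simp [h1]
  -- structural identity for S
  have hS' : S = 1 + lam • (U * Uᵀ) - lam • (∑ i, Ui i * (Ui i)ᵀ) := by
    ext a b
    rw [Matrix.sub_apply, Matrix.add_apply, Matrix.smul_apply, Matrix.smul_apply, hB,
      Matrix.one_apply, hSdef]
    by_cases h : β a = β b
    · simp only [h, if_true]
      ring
    · have hab : a ≠ b := fun hh => h (hh ▸ rfl)
      simp only [h, if_false, hab, smul_eq_mul]
      ring
  -- mulVec projection facts
  have hproj : ∀ (i j : Fin k) (c : Fin r → ℝ),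
      (Ui i)ᵀ *ᵥ ((Ui j) *ᵥ c) = if i = j then c else 0 := by
    intro i j c
    rw [Matrix.mulVec_mulVec, horth]
    by_cases h : i = j <;> simp [h]
  have hUc : ∀ c : Fin r → ℝ, U *ᵥ c = ∑ i, (Ui i) *ᵥ c := by
    intro c; rw [← hsum, auxSumMulVec]
  have hUt : ∀ x : Fin p → ℝ, Uᵀ *ᵥ x = ∑ i, (Ui i)ᵀ *ᵥ x := by
    intro x
    rw [← hsum, Matrix.transpose_sum, auxSumMulVec]
  have hpU : ∀ (j : Fin k) (c : Fin r → ℝ), (Ui j)ᵀ *ᵥ (U *ᵥ c) = c := by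
    intro j c
    rw [hUc, auxMulVecSum]
    simp only [hproj]
    rw [Finset.sum_ite_eq Finset.univ j (fun _ => c)]
    simp
  -- Uᵀ U = k • 1
  have hUtU : Uᵀ * U = (k:ℝ) • (1 : Matrix (Fin r) (Fin r) ℝ) := by
    rw [← hsum, Matrix.transpose_sum, Matrix.sum_mul]
    have : ∀ i : Fin k, (Ui i)ᵀ * (∑ j, Ui j) = 1 := by
      intro i
      rw [Matrix.mul_sum]
      simp only [horth]
      rw [Finset.sum_ite_eq Finset.univ i (fun _ => (1 : Matrix (Fin r) (Fin r) ℝ))]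
      simp
    simp only [this, Finset.sum_const, Finset.card_univ, Fintype.card_fin]
    rw [Nat.cast_smul_eq_nsmul]
  have hBU : (∑ i, Ui i * (Ui i)ᵀ) * U = U := by
    rw [Matrix.sum_mul]
    have : ∀ i : Fin k, Ui i * (Ui i)ᵀ * U = Ui i := by
      intro i
      rw [Matrix.mul_assoc, ← hsum, Matrix.mul_sum]
      simp only [horth]
      rw [Finset.sum_ite_eq Finset.univ i (fun _ => (1 : Matrix (Fin r) (Fin r) ℝ))]
      simp
    simp only [this, hsum]
  -- Goal 1
  have goal1 : S * U = (1 + ((k : ℝ) - 1) * lam) • U := by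
    rw [hS', Matrix.sub_mul, Matrix.add_mul, Matrix.one_mul, Matrix.smul_mul, Matrix.smul_mul,
      hBU, Matrix.mul_assoc, hUtU, Matrix.mul_smul, Matrix.mul_one]
    ext a b
    simp only [Matrix.sub_apply, Matrix.add_apply, Matrix.smul_apply, smul_eq_mul]
    ring
  -- the fundamental identity for S *ᵥ x
  have hstar : ∀ x : Fin p → ℝ, S *ᵥ x =
      x + lam • (U *ᵥ (∑ i, (Ui i)ᵀ *ᵥ x)) - lam • ∑ i, Ui i *ᵥ ((Ui i)ᵀ *ᵥ x) := by
    intro x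
    rw [hS', Matrix.sub_mulVec, Matrix.add_mulVec, Matrix.one_mulVec,
      Matrix.smul_mulVec, Matrix.smul_mulVec, ← Matrix.mulVec_mulVec, hUt,
      auxSumMulVec]
    congr 2
    refine Finset.sum_congr rfl fun i _ => ?_
    rw [Matrix.mulVec_mulVec]
  have hmem : ∀ (t : ℝ) (x : Fin p → ℝ),
      x ∈ Module.End.eigenspace (Matrix.toLin' S) t ↔ S *ᵥ x = t • x := by
    intro t x
    rw [Module.End.mem_eigenspace_iff, Matrix.toLin'_apply]
  have hcomp : ∀ (t : ℝ) (x : Fin p → ℝ), S *ᵥ x = t • x → ∀ (j : Fin k) (a : Fin r),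
      (t - 1 + lam) * ((Ui j)ᵀ *ᵥ x) a = lam * (∑ i, (Ui i)ᵀ *ᵥ x) a := by
    intro t x hx j a
    have h1 : (Ui j)ᵀ *ᵥ (S *ᵥ x) = (Ui j)ᵀ *ᵥ (t • x) := by rw [hx]
    rw [hstar x] at h1
    rw [Matrix.mulVec_sub, Matrix.mulVec_add, Matrix.mulVec_smul, Matrix.mulVec_smul,
      Matrix.mulVec_smul, hpU, auxMulVecSum] at h1
    simp only [hproj] at h1
    rw [Finset.sum_ite_eq Finset.univ j (fun i => (Ui i)ᵀ *ᵥ x)] at h1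
    simp only [Finset.mem_univ, if_true] at h1
    have h2 := congrFun h1 a
    simp only [Pi.add_apply, Pi.sub_apply, Pi.smul_apply, smul_eq_mul] at h2
    linear_combination -h2
  -- helper: value of psiMap under block projections
  have hpsic : ∀ (c : Fin k → Fin r → ℝ) (j : Fin k),
      (Ui j)ᵀ *ᵥ (psiMap U Ui c) = c j - (k:ℝ)⁻¹ • (∑ i, c i) := by
    intro c j
    show (Ui j)ᵀ *ᵥ ((∑ i, Ui i *ᵥ c i) - (k:ℝ)⁻¹ • (U *ᵥ ∑ i, c i)) = _
    rw [Matrix.mulVec_sub, Matrix.mulVec_smul, hpU, auxMulVecSum]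
    simp only [hproj]
    rw [Finset.sum_ite_eq Finset.univ j c]
    simp
  -- eigenspace for 1 + (k-1)lam
  have hEmu : Module.End.eigenspace (Matrix.toLin' S) (1 + ((k:ℝ) - 1) * lam)
      = LinearMap.range (Matrix.toLin' U) := by
    ext x
    rw [hmem, LinearMap.mem_range]
    constructor
    · intro hx
      refine ⟨(k:ℝ)⁻¹ • (∑ i, (Ui i)ᵀ *ᵥ x), ?_⟩
      rw [Matrix.toLin'_apply]
      have hcjv : ∀ j : Fin k, (Ui j)ᵀ *ᵥ x = (k:ℝ)⁻¹ • (∑ i, (Ui i)ᵀ *ᵥ x) := by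
        intro j
        funext a
        have h2 := hcomp _ x hx j a
        rw [Pi.smul_apply, smul_eq_mul]
        have key : (k:ℝ) * ((k:ℝ)⁻¹ * (∑ i, (Ui i)ᵀ *ᵥ x) a) = (∑ i, (Ui i)ᵀ *ᵥ x) a := by
          field_simp
        have h3 : (k:ℝ) * lam * ((k:ℝ)⁻¹ * (∑ i, (Ui i)ᵀ *ᵥ x) a)
            = (k:ℝ) * lam * ((Ui j)ᵀ *ᵥ x) a := by linear_combination lam * key - h2
        exact (mul_left_cancel₀ (mul_ne_zero hk0 hlam) h3).symm
      have h6 : ∑ i, Ui i *ᵥ ((Ui i)ᵀ *ᵥ x)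
          = (k:ℝ)⁻¹ • (U *ᵥ (∑ i, (Ui i)ᵀ *ᵥ x)) := by
        calc ∑ i, Ui i *ᵥ ((Ui i)ᵀ *ᵥ x)
            = ∑ i, Ui i *ᵥ ((k:ℝ)⁻¹ • (∑ i', (Ui i')ᵀ *ᵥ x)) := by
              exact Finset.sum_congr rfl fun i _ => by rw [hcjv i]
          _ = (k:ℝ)⁻¹ • ∑ i, Ui i *ᵥ (∑ i', (Ui i')ᵀ *ᵥ x) := by
              simp only [Matrix.mulVec_smul]
              rw [Finset.smul_sum]
          _ = (k:ℝ)⁻¹ • (U *ᵥ (∑ i', (Ui i')ᵀ *ᵥ x)) := by rw [← hUc]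
      have hx2 := hstar x
      rw [hx, h6] at hx2
      rw [Matrix.mulVec_smul]
      funext a
      have h5 := congrFun hx2 a
      simp only [Pi.add_apply, Pi.sub_apply, Pi.smul_apply, smul_eq_mul] at h5 ⊢
      have key : (k:ℝ) * ((k:ℝ)⁻¹ * (U *ᵥ (∑ i, (Ui i)ᵀ *ᵥ x)) a)
          = (U *ᵥ (∑ i, (Ui i)ᵀ *ᵥ x)) a := by field_simp
      have h3 : ((k:ℝ) - 1) * lam * ((k:ℝ)⁻¹ * (U *ᵥ (∑ i, (Ui i)ᵀ *ᵥ x)) a)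
          = ((k:ℝ) - 1) * lam * x a := by linear_combination lam * key - h5
      exact mul_left_cancel₀ (mul_ne_zero hk1 hlam) h3
    · rintro ⟨d, rfl⟩
      rw [Matrix.toLin'_apply, hstar]
      have e2 : ∑ i : Fin k, (Ui i)ᵀ *ᵥ (U *ᵥ d) = (k:ℝ) • d := by
        simp only [hpU]
        rw [Finset.sum_const, Finset.card_univ, Fintype.card_fin, ← Nat.cast_smul_eq_nsmul ℝ]
      have e3 : ∑ i : Fin k, Ui i *ᵥ ((Ui i)ᵀ *ᵥ (U *ᵥ d)) = U *ᵥ d := by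
        simp only [hpU]
        rw [← hUc]
      rw [e2, e3, Matrix.mulVec_smul]
      funext a
      simp only [Pi.add_apply, Pi.sub_apply, Pi.smul_apply, smul_eq_mul]
      ring
  -- eigenspace for 1 - lam
  have j0 : Fin k := ⟨0, by omega⟩
  have hE2 : Module.End.eigenspace (Matrix.toLin' S) (1 - lam)
      = LinearMap.range (psiMap U Ui) := by
    ext x
    rw [hmem, LinearMap.mem_range]
    constructor
    · intro hx
      refine ⟨fun i => (Ui i)ᵀ *ᵥ x, ?_⟩
      have hs : (∑ i, (Ui i)ᵀ *ᵥ x) = 0 := by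
        funext a
        have h2 := hcomp _ x hx j0 a
        have h3 : lam * (∑ i, (Ui i)ᵀ *ᵥ x) a = 0 := by linear_combination -h2
        rcases mul_eq_zero.mp h3 with h | h
        · exact absurd h hlam
        · simpa using h
      have hx2 := hstar x
      rw [hx, hs, Matrix.mulVec_zero, smul_zero, add_zero] at hx2
      show (∑ i, Ui i *ᵥ ((Ui i)ᵀ *ᵥ x)) - (k:ℝ)⁻¹ • (U *ᵥ ∑ i, (Ui i)ᵀ *ᵥ x) = x
      rw [hs, Matrix.mulVec_zero, smul_zero, sub_zero]
      funext a
      have h5 := congrFun hx2 a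
      simp only [Pi.sub_apply, Pi.smul_apply, smul_eq_mul] at h5
      have h3 : lam * ((∑ i, Ui i *ᵥ ((Ui i)ᵀ *ᵥ x)) a - x a) = 0 := by linear_combination h5
      rcases mul_eq_zero.mp h3 with h | h
      · exact absurd h hlam
      · linarith
    · rintro ⟨c, rfl⟩
      have hsum0 : ∑ j, ((Ui j)ᵀ *ᵥ (psiMap U Ui c)) = 0 := by
        simp only [hpsic]
        rw [Finset.sum_sub_distrib, Finset.sum_const, Finset.card_univ, Fintype.card_fin,
          ← Nat.cast_smul_eq_nsmul ℝ, smul_smul, mul_inv_cancel₀ hk0, one_smul, sub_self]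
      rw [hstar, hsum0, Matrix.mulVec_zero, smul_zero, add_zero]
      have hT : ∑ i, Ui i *ᵥ ((Ui i)ᵀ *ᵥ (psiMap U Ui c)) = psiMap U Ui c := by
        simp only [hpsic]
        simp only [Matrix.mulVec_sub, Matrix.mulVec_smul, Finset.sum_sub_distrib]
        rw [← Finset.smul_sum, ← hUc]
        rfl
      rw [hT]
      funext a
      simp only [Pi.sub_apply, Pi.smul_apply, smul_eq_mul]
      ring
  -- eigenspace for 1
  set Phi : (Fin p → ℝ) →ₗ[ℝ] (Fin k → Fin r → ℝ) :=
    LinearMap.pi (fun i => Matrix.toLin' (Ui i)ᵀ) with hPhidef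
  have hPhiApp : ∀ (x : Fin p → ℝ) (i : Fin k), Phi x i = (Ui i)ᵀ *ᵥ x := by
    intro x i
    rw [hPhidef, LinearMap.pi_apply, Matrix.toLin'_apply]
  have hE3 : Module.End.eigenspace (Matrix.toLin' S) 1 = LinearMap.ker Phi := by
    ext x
    rw [hmem, LinearMap.mem_ker]
    constructor
    · intro hx
      have hcs : ∀ (j : Fin k) (a : Fin r),
          ((Ui j)ᵀ *ᵥ x) a = (∑ i, (Ui i)ᵀ *ᵥ x) a := by
        intro j a
        have h2 := hcomp 1 x hx j a
        have h3 : lam * (((Ui j)ᵀ *ᵥ x) a - (∑ i, (Ui i)ᵀ *ᵥ x) a) = 0 := by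
          linear_combination h2
        rcases mul_eq_zero.mp h3 with h | h
        · exact absurd h hlam
        · linarith
      have hs0 : ∀ a, (∑ i, (Ui i)ᵀ *ᵥ x) a = 0 := by
        intro a
        have h7 : (∑ i, (Ui i)ᵀ *ᵥ x) a = (k:ℝ) * (∑ i, (Ui i)ᵀ *ᵥ x) a := by
          calc (∑ i, (Ui i)ᵀ *ᵥ x) a = ∑ i : Fin k, ((Ui i)ᵀ *ᵥ x) a :=
                Finset.sum_apply a Finset.univ _
            _ = ∑ _i : Fin k, (∑ i', (Ui i')ᵀ *ᵥ x) a :=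
                Finset.sum_congr rfl fun j _ => hcs j a
            _ = (k:ℝ) * (∑ i, (Ui i)ᵀ *ᵥ x) a := by
                rw [Finset.sum_const, Finset.card_univ, Fintype.card_fin, nsmul_eq_mul]
        have h9 : ((k:ℝ) - 1) * (∑ i, (Ui i)ᵀ *ᵥ x) a = 0 := by linear_combination -h7
        rcases mul_eq_zero.mp h9 with h | h
        · exact absurd h hk1
        · exact h
      funext i a
      rw [hPhiApp]
      calc ((Ui i)ᵀ *ᵥ x) a = (∑ i', (Ui i')ᵀ *ᵥ x) a := hcs i a
        _ = 0 := hs0 a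
    · intro hx
      have hcz : ∀ i : Fin k, (Ui i)ᵀ *ᵥ x = 0 := by
        intro i
        rw [← hPhiApp x i, hx]
        rfl
      rw [hstar]
      simp only [hcz, Matrix.mulVec_zero, Finset.sum_const, Finset.card_univ, smul_zero,
        add_zero, sub_zero, one_smul]
  -- dimension bookkeeping
  have hd1 : Module.finrank ℝ (Fin r → ℝ) = r := Module.finrank_fin_fun ℝ
  have hd2 : Module.finrank ℝ (Fin k → Fin r → ℝ) = k * r := by
    rw [Module.finrank_pi_fintype ℝ]
    simp only [hd1, Finset.sum_const, Finset.card_univ, Fintype.card_fin, smul_eq_mul]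
  refine ⟨goal1, ?_, ?_, ?_, ?_⟩
  · rw [hEmu, Matrix.range_toLin']
    rfl
  · rw [hEmu]
    have hinj : Function.Injective (Matrix.toLin' U) := by
      intro a b h
      have h2 := congrArg (fun v => (Ui j0)ᵀ *ᵥ v) h
      simpa only [Matrix.toLin'_apply, hpU] using h2
    rw [LinearMap.finrank_range_of_inj hinj, hd1]
  · rw [hE2]
    have hkerψ : LinearMap.ker (psiMap U Ui)
        = LinearMap.range (LinearMap.pi fun _ : Fin k =>
            (LinearMap.id : (Fin r → ℝ) →ₗ[ℝ] (Fin r → ℝ))) := by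
      ext c
      rw [LinearMap.mem_ker, LinearMap.mem_range]
      constructor
      · intro hc
        refine ⟨(k:ℝ)⁻¹ • ∑ i, c i, ?_⟩
        funext j
        rw [LinearMap.pi_apply, LinearMap.id_apply]
        have h2 := hpsic c j
        rw [hc, Matrix.mulVec_zero] at h2
        exact (sub_eq_zero.mp h2.symm).symm
      · rintro ⟨d, rfl⟩
        show (∑ i, Ui i *ᵥ d) - (k:ℝ)⁻¹ • (U *ᵥ ∑ _i : Fin k, d) = 0
        rw [← hUc, Finset.sum_const, Finset.card_univ, Fintype.card_fin,
          ← Nat.cast_smul_eq_nsmul ℝ, Matrix.mulVec_smul, smul_smul,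
          inv_mul_cancel₀ hk0, one_smul, sub_self]
    have hδinj : Function.Injective (LinearMap.pi fun _ : Fin k =>
        (LinearMap.id : (Fin r → ℝ) →ₗ[ℝ] (Fin r → ℝ))) := by
      intro a b h
      exact congrFun h j0
    have hrn := LinearMap.finrank_range_add_finrank_ker (psiMap U Ui)
    rw [hkerψ, LinearMap.finrank_range_of_inj hδinj, hd1, hd2] at hrn
    have hkr : (k - 1) * r + r = k * r := by
      have h1 : k - 1 + 1 = k := by omega
      calc (k - 1) * r + r = ((k - 1) + 1) * r := by ring
        _ = k * r := by rw [h1]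
    exact Nat.add_right_cancel (hrn.trans hkr.symm)
  · rw [hE3]
    have hsurj : Function.Surjective Phi := by
      intro d
      refine ⟨∑ i, Ui i *ᵥ d i, ?_⟩
      funext j
      rw [hPhiApp, auxMulVecSum]
      simp only [hproj]
      rw [Finset.sum_ite_eq Finset.univ j d]
      simp
    have hrn := LinearMap.finrank_range_add_finrank_ker Phi
    rw [LinearMap.range_eq_top.mpr hsurj, finrank_top, hd2,
      Module.finrank_fin_fun ℝ] at hrn
    have hge : k * r ≤ p := by
      rw [hp]
      calc k * r = ∑ _i : Fin k, r := by
            simp only [Finset.sum_const, Finset.card_univ, Fintype.card_fin, smul_eq_mul]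
        _ ≤ ∑ i, p_ i := Finset.sum_le_sum fun i _ => hpr i
    omega

end
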